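/- For every bipartite density matrix ρ on ℂ^{d_B}⊗ℂ^{d_C} (finite positive dimensions), every eigenvalue of the partial transpose ρ^Γ is at most 1. -/

import Mathlib

open scoped BigOperators ComplexOrder
open Matrix

noncomputable section

set_option maxHeartbeats 1000000

/-- Partial transpose over the second tensor factor. -/
def ptranspose {d d' : ℕ} (M : Matrix (Fin d × Fin d') (Fin d × Fin d') ℂ) :
    Matrix (Fin d × Fin d') (Fin d × Fin d') ℂ :=
  fun p q => M (p.1, q.2) (q.1, p.2)

lemma aux_conj_trace {n : Type*} [Fintype n] [DecidableEq n] (U D : Matrix n n ℂ)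
    (hU : star U * U = 1) : (U * D * star U).trace = D.trace := by
  rw [Matrix.trace_mul_cycle, hU, Matrix.one_mul]

lemma aux_conj_trace_sq {n : Type*} [Fintype n] [DecidableEq n] (U D : Matrix n n ℂ)
    (hU : star U * U = 1) : ((U * D * star U) * (U * D * star U)).trace = (D * D).trace := by
  rw [show (U * D * star U) * (U * D * star U) =
      U * (D * ((star U * U) * D)) * star U from by noncomm_ring, hU, Matrix.one_mul]
  exact aux_conj_trace U (D * D) hU

lemma aux_trace_eq_sum {n : Type*} [Fintype n] [DecidableEq n] {A : Matrix n n ℂ}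
    (hA : A.IsHermitian) : A.trace = ∑ i, (hA.eigenvalues i : ℂ) := by
  conv_lhs => rw [hA.spectral_theorem]
  rw [Unitary.conjStarAlgAut_apply, aux_conj_trace _ _ ((Matrix.mem_unitaryGroup_iff').mp (hA.eigenvectorUnitary).2),
    Matrix.trace_diagonal]
  rfl

lemma aux_trace_sq {n : Type*} [Fintype n] [DecidableEq n] {A : Matrix n n ℂ}
    (hA : A.IsHermitian) : (A * A).trace = ∑ i, ((hA.eigenvalues i : ℂ)^2) := by
  conv_lhs => rw [hA.spectral_theorem]
  rw [Unitary.conjStarAlgAut_apply, aux_conj_trace_sq _ _ ((Matrix.mem_unitaryGroup_iff').mp (hA.eigenvectorUnitary).2),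
    Matrix.diagonal_mul_diagonal, Matrix.trace_diagonal]
  simp [sq]

lemma aux_ptrace {dB dC : ℕ} (ρ : Matrix (Fin dB × Fin dC) (Fin dB × Fin dC) ℂ) :
    (ptranspose ρ * ptranspose ρ).trace = (ρ * ρ).trace := by
  simp only [Matrix.trace, Matrix.diag, Matrix.mul_apply, ptranspose]
  rw [← Finset.sum_product', ← Finset.sum_product']
  apply Finset.sum_nbij' (fun x => ((x.1.1, x.2.2), (x.2.1, x.1.2)))
    (fun x => ((x.1.1, x.2.2), (x.2.1, x.1.2))) <;> simp

theorem eigenvalue_ptranspose_le_one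
    (dB dC : ℕ) (hdB : 0 < dB) (hdC : 0 < dC)
    (ρ : Matrix (Fin dB × Fin dC) (Fin dB × Fin dC) ℂ)
    (hρ : ρ.PosSemidef) (htr : ρ.trace = 1)
    (hH : (ptranspose ρ).IsHermitian) :
    ∀ i : Fin dB × Fin dC, hH.eigenvalues i ≤ 1 := by
  intro i
  set μ := hρ.1.eigenvalues
  have hμ0 : ∀ j, 0 ≤ μ j := hρ.eigenvalues_nonneg
  have hμ1 : ∑ j, μ j = 1 := by
    have := aux_trace_eq_sum hρ.1
    rw [htr] at this
    have : ((1 : ℝ) : ℂ) = ((∑ j, μ j : ℝ) : ℂ) := by push_cast; exact this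
    exact_mod_cast this.symm
  -- sum of squares of eigenvalues of ρ ≤ 1
  have hsq : ∑ j, (μ j)^2 ≤ 1 := by
    calc ∑ j, (μ j)^2 ≤ ∑ j, μ j * ∑ k, μ k := by
          apply Finset.sum_le_sum
          intro j _
          rw [sq]
          exact mul_le_mul_of_nonneg_left
            (Finset.single_le_sum (fun k _ => hμ0 k) (Finset.mem_univ j)) (hμ0 j)
      _ = 1 := by rw [← Finset.sum_mul, hμ1]; ring
  -- sum of squares of eigenvalues of ptranspose ρ equals that of ρ
  have heq : ∑ j, (hH.eigenvalues j)^2 = ∑ j, (μ j)^2 := by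
    have h1 := aux_trace_sq hH
    have h2 := aux_trace_sq hρ.1
    rw [aux_ptrace, h2] at h1
    have : ((∑ j, (hH.eigenvalues j)^2 : ℝ) : ℂ) = ((∑ j, (μ j)^2 : ℝ) : ℂ) := by
      push_cast; exact h1.symm
    exact_mod_cast this
  have h2 : (hH.eigenvalues i)^2 ≤ 1 := by
    calc (hH.eigenvalues i)^2 ≤ ∑ j, (hH.eigenvalues j)^2 :=
          Finset.single_le_sum (f := fun j => hH.eigenvalues j ^ 2)
            (fun j _ => sq_nonneg _) (Finset.mem_univ i)
      _ = ∑ j, (μ j)^2 := heq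
      _ ≤ 1 := hsq
  nlinarith [sq_nonneg (hH.eigenvalues i - 1), sq_nonneg (hH.eigenvalues i + 1)]

end
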